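/- arXiv:1701.04548 — 6 statements merged into one kernel-verified Lean document; each statement's English description precedes it below -/
import Mathlib

section
/- Let a_1, ..., a_n be nonnegative reals with arithmetic mean A = (a_1 + ... + a_n)/n and geometric mean G = (a_1 ⋯ a_n)^{1/n}. Then A - G ≥ (1/(n(n-1))) · Σ_{1 ≤ i < j ≤ n} (√a_i - √a_j)². -/
open Finset Real

theorem amgm_pairs (n : ℕ) (hn : 2 ≤ n) (a : ℕ → ℝ)
    (ha : ∀ i ∈ Finset.Icc 1 n, 0 ≤ a i) :
    (∑ i ∈ Finset.Icc 1 n, a i) / n - (∏ i ∈ Finset.Icc 1 n, a i) ^ ((1 : ℝ) / n) ≥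
      (1 / (n * (n - 1) : ℝ)) *
        ∑ i ∈ Finset.Icc 1 n, ∑ j ∈ Finset.Icc 1 n,
          if i < j then (Real.sqrt (a i) - Real.sqrt (a j)) ^ 2 else 0 := by
  set s := Finset.Icc 1 n with hs
  set b : ℕ → ℝ := fun i => Real.sqrt (a i) with hbdef
  have hb0 : ∀ i ∈ s, 0 ≤ b i := fun i _ => Real.sqrt_nonneg _
  have hab : ∀ i ∈ s, a i = b i ^ 2 := fun i hi => (Real.sq_sqrt (ha i hi)).symm
  have hcard : s.card = n := by simp [hs]
  have hn0 : (0:ℝ) < n := by positivity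
  have hn0' : (n:ℝ) ≠ 0 := ne_of_gt hn0
  have hn1 : (0:ℝ) < (n:ℝ) - 1 := by
    have : (2:ℝ) ≤ n := by exact_mod_cast hn
    linarith
  have hn1' : (n:ℝ) - 1 ≠ 0 := ne_of_gt hn1
  set P := ∏ i ∈ s, b i with hP
  have hP0 : 0 ≤ P := Finset.prod_nonneg hb0
  set S := ∑ i ∈ s, b i with hS
  set Q := ∑ i ∈ s, a i with hQ
  have hQ2 : Q = ∑ i ∈ s, b i ^ 2 := Finset.sum_congr rfl hab
  -- card of offDiag
  have hcardoff : (s.offDiag.card : ℝ) = n * ((n:ℝ) - 1) := by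
    rw [Finset.offDiag_card, hcard]
    have h1 : n ≤ n * n := Nat.le_mul_of_pos_left n (by omega)
    push_cast [Nat.cast_sub h1]
    ring
  -- product of a = P^2
  have hprodA : ∏ i ∈ s, a i = P ^ 2 := by
    rw [Finset.prod_congr rfl hab, Finset.prod_pow]
  have hoff : s.offDiag = (s ×ˢ s).filter (fun p => p.1 ≠ p.2) := by
    ext x; simp [and_assoc]
  -- product over offDiag
  have hprodOff : ∏ p ∈ s.offDiag, (b p.1 * b p.2) = P ^ (2 * (n - 1)) := by
    have h1 : ∏ p ∈ s.offDiag, b p.1 = P ^ (n - 1) := by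
      rw [hoff, Finset.prod_filter, Finset.prod_product]
      have : ∀ i ∈ s, (∏ j ∈ s, if (i, j).1 ≠ (i, j).2 then b (i, j).1 else 1)
          = b i ^ (n - 1) := by
        intro i hi
        rw [← Finset.prod_filter]
        have hf : (s.filter fun j => i ≠ j) = s.erase i := Finset.filter_ne s i
        rw [hf]
        simp [Finset.prod_const, Finset.card_erase_of_mem hi, hcard]
      rw [Finset.prod_congr rfl this, Finset.prod_pow]
    have h2 : ∏ p ∈ s.offDiag, b p.2 = P ^ (n - 1) := by
      rw [hoff, Finset.prod_filter, Finset.prod_product, Finset.prod_comm]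
      have : ∀ j ∈ s, (∏ i ∈ s, if (i, j).1 ≠ (i, j).2 then b (i, j).2 else 1)
          = b j ^ (n - 1) := by
        intro j hj
        rw [← Finset.prod_filter]
        have hf : (s.filter fun i => i ≠ j) = s.erase j := Finset.filter_ne' s j
        rw [hf]
        simp [Finset.prod_const, Finset.card_erase_of_mem hj, hcard]
      rw [Finset.prod_congr rfl this, Finset.prod_pow]
    rw [Finset.prod_mul_distrib, h1, h2, ← pow_add]
    congr 1
    omega
  -- sum over offDiag
  have hsumOff : ∑ p ∈ s.offDiag, (b p.1 * b p.2) = S * S - Q := by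
    rw [hoff, Finset.sum_filter, Finset.sum_product]
    have hpt : ∀ i j : ℕ, (if (i, j).1 ≠ (i, j).2 then b i * b j else 0)
        = b i * b j - (if i = j then b i * b j else 0) := by
      intro i j
      by_cases h : i = j <;> simp [h]
    simp_rw [hpt]
    rw [Finset.sum_congr rfl (fun i _ => Finset.sum_sub_distrib _ _), Finset.sum_sub_distrib]
    have hd : ∀ i ∈ s, (∑ j ∈ s, if i = j then b i * b j else 0) = b i ^ 2 := by
      intro i hi
      rw [Finset.sum_ite_eq s i (fun j => b i * b j), if_pos hi]
      ring
    rw [Finset.sum_congr rfl hd, ← hQ2]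
    have : ∑ i ∈ s, ∑ j ∈ s, b i * b j = S * S := by
      rw [← Finset.sum_mul_sum]
    rw [this]
  -- AM-GM over offDiag
  have hamgm := Real.geom_mean_le_arith_mean_weighted s.offDiag
      (fun _ => 1 / ((n:ℝ) * ((n:ℝ) - 1))) (fun p => b p.1 * b p.2)
      (fun p _ => by positivity)
      (by
        rw [Finset.sum_const, nsmul_eq_mul, hcardoff]
        field_simp)
      (fun p hp => by
        have h := Finset.mem_offDiag.mp hp
        exact mul_nonneg (hb0 _ h.1) (hb0 _ h.2.1))
  have hgeom : ∏ p ∈ s.offDiag, (b p.1 * b p.2) ^ ((1:ℝ) / ((n:ℝ) * ((n:ℝ) - 1)))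
      = P ^ ((2:ℝ) / n) := by
    rw [Real.finset_prod_rpow s.offDiag _ (fun p hp => by
      have h := Finset.mem_offDiag.mp hp
      exact mul_nonneg (hb0 _ h.1) (hb0 _ h.2.1)) _]
    rw [hprodOff, ← Real.rpow_natCast P (2 * (n - 1)), ← Real.rpow_mul hP0]
    congr 1
    have h1 : ((2 * (n - 1) : ℕ) : ℝ) = 2 * ((n:ℝ) - 1) := by
      push_cast [Nat.cast_sub (by omega : 1 ≤ n)]
      ring
    rw [h1]
    field_simp
  have hG : (∏ i ∈ s, a i) ^ ((1:ℝ) / n) = P ^ ((2:ℝ) / n) := by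
    rw [hprodA, ← Real.rpow_natCast P 2, ← Real.rpow_mul hP0]
    congr 1
    push_cast
    ring
  have hsumw : ∑ p ∈ s.offDiag, (1 / ((n:ℝ) * ((n:ℝ) - 1))) * (b p.1 * b p.2)
      = (1 / ((n:ℝ) * ((n:ℝ) - 1))) * (S * S - Q) := by
    rw [← Finset.mul_sum, hsumOff]
  have hkey : P ^ ((2:ℝ) / n) ≤ (1 / ((n:ℝ) * ((n:ℝ) - 1))) * (S * S - Q) := by
    calc P ^ ((2:ℝ) / n)
        = ∏ p ∈ s.offDiag, (b p.1 * b p.2) ^ ((1:ℝ) / ((n:ℝ) * ((n:ℝ) - 1))) := hgeom.symm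
      _ ≤ ∑ p ∈ s.offDiag, (1 / ((n:ℝ) * ((n:ℝ) - 1))) * (b p.1 * b p.2) := hamgm
      _ = (1 / ((n:ℝ) * ((n:ℝ) - 1))) * (S * S - Q) := hsumw
  -- pair sum identity
  have hpair : ∑ i ∈ s, ∑ j ∈ s, (if i < j then (b i - b j) ^ 2 else 0)
      = (n:ℝ) * Q - S * S := by
    have hpt : ∀ i j : ℕ, (b i - b j) ^ 2
        = (if i < j then (b i - b j) ^ 2 else 0) + (if j < i then (b i - b j) ^ 2 else 0) := by
      intro i j
      rcases lt_trichotomy i j with h | h | h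
      · simp [h, not_lt_of_gt h]
      · subst h; simp
      · simp [h, not_lt_of_gt h]
    have hfull : ∑ i ∈ s, ∑ j ∈ s, (b i - b j) ^ 2 = 2 * ((n:ℝ) * Q - S * S) := by
      have expand : ∀ i ∈ s, ∑ j ∈ s, (b i - b j) ^ 2
          = (n:ℝ) * b i ^ 2 - 2 * b i * S + (∑ j ∈ s, b j ^ 2) := by
        intro i hi
        have h1 : ∀ j : ℕ, (b i - b j) ^ 2 = b i ^ 2 - 2 * b i * b j + b j ^ 2 := by
          intro j; ring
        simp_rw [h1]
        rw [Finset.sum_add_distrib, Finset.sum_sub_distrib, Finset.sum_const, ← Finset.mul_sum,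
          hcard, nsmul_eq_mul, ← hS]
      rw [Finset.sum_congr rfl expand, Finset.sum_add_distrib, Finset.sum_sub_distrib,
        ← Finset.mul_sum, Finset.sum_const, hcard, nsmul_eq_mul, ← hQ2]
      have h2 : ∑ i ∈ s, 2 * b i * S = 2 * S * S := by
        have : ∑ i ∈ s, 2 * b i * S = 2 * S * ∑ i ∈ s, b i := by
          rw [Finset.mul_sum]
          exact Finset.sum_congr rfl (fun i _ => by ring)
        rw [this, ← hS]
      rw [h2]
      ring
    have hsym : ∑ i ∈ s, ∑ j ∈ s, (if j < i then (b i - b j) ^ 2 else 0)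
        = ∑ i ∈ s, ∑ j ∈ s, (if i < j then (b i - b j) ^ 2 else 0) := by
      rw [Finset.sum_comm]
      apply Finset.sum_congr rfl
      intro i _
      apply Finset.sum_congr rfl
      intro j _
      split_ifs with h
      · ring
      · rfl
    have : ∑ i ∈ s, ∑ j ∈ s, (b i - b j) ^ 2
        = 2 * ∑ i ∈ s, ∑ j ∈ s, (if i < j then (b i - b j) ^ 2 else 0) := by
      rw [Finset.sum_congr rfl (fun i _ => Finset.sum_congr rfl (fun j _ => hpt i j))]
      rw [Finset.sum_congr rfl (fun i _ => Finset.sum_add_distrib), Finset.sum_add_distrib, hsym]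
      ring
    rw [this] at hfull
    linarith
  -- finish
  have hpair' : (∑ i ∈ s, ∑ j ∈ s,
      if i < j then (Real.sqrt (a i) - Real.sqrt (a j)) ^ 2 else 0) = (n:ℝ) * Q - S * S := hpair
  rw [ge_iff_le, hG, hpair']
  have heq : Q / n - (1 / ((n:ℝ) * ((n:ℝ) - 1))) * ((n:ℝ) * Q - S * S)
      = (1 / ((n:ℝ) * ((n:ℝ) - 1))) * (S * S - Q) := by
    field_simp
    ring
  linarith [hkey]
end

section
/- Let a_1, ..., a_n be nonnegative reals with arithmetic mean A and geometric mean G, and let σ be any permutation of {1,...,n} with b_j = a_{σ(j)}. Then A - G ≥ (1/n) · Σ_{j=1}^{⌊n/2⌋} (√b_j - √b_{n+1-j})². -/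
open Finset Real

theorem amgm_permutation (n : ℕ) (hn : 0 < n) (a : ℕ → ℝ)
    (ha : ∀ i ∈ Finset.Icc 1 n, 0 ≤ a i)
    (σ : Equiv.Perm ℕ) (hσ : ∀ i ∈ Finset.Icc 1 n, σ i ∈ Finset.Icc 1 n) :
    (∑ i ∈ Finset.Icc 1 n, a i) / n - (∏ i ∈ Finset.Icc 1 n, a i) ^ ((1 : ℝ) / n) ≥
      (1 / (n : ℝ)) *
        ∑ j ∈ Finset.Icc 1 (n / 2),
          (Real.sqrt (a (σ j)) - Real.sqrt (a (σ (n + 1 - j)))) ^ 2 := by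
  have hn' : (0:ℝ) < n := Nat.cast_pos.mpr hn
  set m := n / 2 with hm
  set b : ℕ → ℝ := fun i => a (σ i) with hb
  set z : ℕ → ℝ := fun j => Real.sqrt (b j * b (n + 1 - j)) with hz
  have hmem : ∀ j, j ∈ Finset.Icc 1 n → n + 1 - j ∈ Finset.Icc 1 n := by
    intro j hj
    simp only [Finset.mem_Icc] at hj ⊢
    omega
  have hbnn : ∀ i ∈ Finset.Icc 1 n, 0 ≤ b i := fun i hi => ha _ (hσ i hi)
  -- σ is a bijection of Icc 1 n
  have himg : (Finset.Icc 1 n).image σ = Finset.Icc 1 n := by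
    apply Finset.eq_of_subset_of_card_le
    · intro x hx
      obtain ⟨y, hy, rfl⟩ := Finset.mem_image.mp hx
      exact hσ y hy
    · rw [Finset.card_image_of_injective _ σ.injective]
  have hσsymm : ∀ i ∈ Finset.Icc 1 n, σ.symm i ∈ Finset.Icc 1 n := by
    intro i hi
    rw [← himg] at hi
    obtain ⟨y, hy, rfl⟩ := Finset.mem_image.mp hi
    simpa using hy
  have hsum : ∑ i ∈ Finset.Icc 1 n, b i = ∑ i ∈ Finset.Icc 1 n, a i := by
    refine Finset.sum_nbij' σ σ.symm hσ hσsymm ?_ ?_ ?_ <;> simp [hb]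
  have hprodb : ∏ i ∈ Finset.Icc 1 n, b i = ∏ i ∈ Finset.Icc 1 n, a i := by
    refine Finset.prod_nbij' σ σ.symm hσ hσsymm ?_ ?_ ?_ <;> simp [hb]
  -- reflection j ↦ n+1-j
  have hrefl : ∀ f : ℕ → ℝ, ∏ j ∈ Finset.Icc 1 n, f (n + 1 - j) = ∏ j ∈ Finset.Icc 1 n, f j := by
    intro f
    refine Finset.prod_nbij' (fun j => n + 1 - j) (fun j => n + 1 - j) hmem hmem
      (fun j hj => by simp only [Finset.mem_Icc] at hj; show n + 1 - (n + 1 - j) = j; omega)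
      (fun j hj => by simp only [Finset.mem_Icc] at hj; show n + 1 - (n + 1 - j) = j; omega)
      (fun j hj => rfl)
  -- product of z equals product of a
  have hzprod : ∏ j ∈ Finset.Icc 1 n, z j = ∏ i ∈ Finset.Icc 1 n, a i := by
    have h1 : ∏ j ∈ Finset.Icc 1 n, z j
        = (∏ j ∈ Finset.Icc 1 n, Real.sqrt (b j)) *
          ∏ j ∈ Finset.Icc 1 n, Real.sqrt (b (n + 1 - j)) := by
      rw [← Finset.prod_mul_distrib]
      refine Finset.prod_congr rfl fun j hj => ?_
      exact Real.sqrt_mul (hbnn j hj) _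
    rw [h1, hrefl (fun j => Real.sqrt (b j)), ← Finset.prod_mul_distrib, ← hprodb]
    refine Finset.prod_congr rfl fun j hj => Real.mul_self_sqrt (hbnn j hj)
  -- AM-GM for z
  have hznn : ∀ j ∈ Finset.Icc 1 n, (0:ℝ) ≤ z j := fun j _ => Real.sqrt_nonneg _
  have hamgm : (∏ i ∈ Finset.Icc 1 n, a i) ^ ((1:ℝ)/n) ≤
      (1/(n:ℝ)) * ∑ j ∈ Finset.Icc 1 n, z j := by
    have := Real.geom_mean_le_arith_mean_weighted (Finset.Icc 1 n)
      (fun _ => 1/(n:ℝ)) z (fun i _ => by positivity)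
      (by simp [Nat.card_Icc]; field_simp) hznn
    rw [Real.finset_prod_rpow _ _ hznn] at this
    rw [← hzprod]
    calc (∏ j ∈ Finset.Icc 1 n, z j) ^ ((1:ℝ)/n)
        ≤ ∑ j ∈ Finset.Icc 1 n, (1/(n:ℝ)) * z j := this
      _ = (1/(n:ℝ)) * ∑ j ∈ Finset.Icc 1 n, z j := by rw [Finset.mul_sum]
  -- partition of Icc 1 n
  have hpart : ∀ f : ℕ → ℝ,
      (∑ j ∈ Finset.Ioc 0 m, f j) + (∑ j ∈ Finset.Ioc m (n-m), f j)
        + (∑ j ∈ Finset.Ioc (n-m) n, f j) = ∑ j ∈ Finset.Icc 1 n, f j := by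
    intro f
    rw [show Finset.Icc 1 n = Finset.Ioc 0 n from Finset.Icc_add_one_left_eq_Ioc 0 n]
    rw [Finset.sum_Ioc_consecutive f (by omega : (0:ℕ) ≤ m) (by omega : m ≤ n - m)]
    exact Finset.sum_Ioc_consecutive f (by omega) (by omega)
  -- upper part equals reflected lower part
  have hup : ∀ f : ℕ → ℝ,
      ∑ j ∈ Finset.Ioc (n-m) n, f j = ∑ j ∈ Finset.Ioc 0 m, f (n + 1 - j) := by
    intro f
    refine Finset.sum_nbij' (fun j => n + 1 - j) (fun j => n + 1 - j)
      (fun j hj => by simp only [Finset.mem_Ioc] at hj ⊢; omega)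
      (fun j hj => by simp only [Finset.mem_Ioc] at hj ⊢; omega)
      (fun j hj => by simp only [Finset.mem_Ioc] at hj; show n + 1 - (n + 1 - j) = j; omega)
      (fun j hj => by simp only [Finset.mem_Ioc] at hj; show n + 1 - (n + 1 - j) = j; omega)
      (fun j hj => by simp only [Finset.mem_Ioc] at hj; show f j = f (n + 1 - (n + 1 - j)); congr 1; omega)
  -- middle part: z = b
  have hmid : ∑ j ∈ Finset.Ioc m (n-m), z j = ∑ j ∈ Finset.Ioc m (n-m), b j := by
    refine Finset.sum_congr rfl fun j hj => ?_
    simp only [Finset.mem_Ioc] at hj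
    have hjj : n + 1 - j = j := by omega
    have hbj : 0 ≤ b j := hbnn j (by simp only [Finset.mem_Icc]; omega)
    rw [hz]; simp only [hjj]
    exact Real.sqrt_mul_self hbj
  -- z self-reflection
  have hzrefl : ∀ j ∈ Finset.Ioc 0 m, z (n + 1 - j) = z j := by
    intro j hj
    simp only [Finset.mem_Ioc] at hj
    have : n + 1 - (n + 1 - j) = j := by omega
    rw [hz]; simp only [this, mul_comm]
  -- expand the squares
  have hlow : ∀ j ∈ Finset.Icc 1 m, (Real.sqrt (b j) - Real.sqrt (b (n+1-j)))^2
      = b j + b (n+1-j) - 2 * z j := by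
    intro j hj
    simp only [Finset.mem_Icc] at hj
    have h1 : 0 ≤ b j := hbnn j (by simp only [Finset.mem_Icc]; omega)
    have h2 : 0 ≤ b (n+1-j) := hbnn _ (by simp only [Finset.mem_Icc]; omega)
    have hzj : z j = Real.sqrt (b j) * Real.sqrt (b (n+1-j)) := Real.sqrt_mul h1 _
    rw [sub_sq, Real.sq_sqrt h1, Real.sq_sqrt h2, hzj]
    ring
  have hIccIoc : Finset.Icc 1 m = Finset.Ioc 0 m := Finset.Icc_add_one_left_eq_Ioc 0 m
  have hsq : ∑ j ∈ Finset.Icc 1 m, (Real.sqrt (b j) - Real.sqrt (b (n+1-j)))^2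
      = ∑ j ∈ Finset.Icc 1 n, b j - ∑ j ∈ Finset.Icc 1 n, z j := by
    rw [Finset.sum_congr rfl hlow]
    rw [← hpart b, ← hpart z, hup b, hup z, hmid, hIccIoc]
    rw [Finset.sum_congr rfl hzrefl]
    simp only [Finset.sum_add_distrib, Finset.sum_sub_distrib, ← Finset.mul_sum]
    ring
  have hgoal : (1 / (n : ℝ)) * ∑ j ∈ Finset.Icc 1 m,
      (Real.sqrt (a (σ j)) - Real.sqrt (a (σ (n + 1 - j)))) ^ 2
      = (1/(n:ℝ)) * (∑ i ∈ Finset.Icc 1 n, a i) - (1/(n:ℝ)) * ∑ j ∈ Finset.Icc 1 n, z j := by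
    have : ∑ j ∈ Finset.Icc 1 m, (Real.sqrt (a (σ j)) - Real.sqrt (a (σ (n + 1 - j)))) ^ 2
        = ∑ j ∈ Finset.Icc 1 m, (Real.sqrt (b j) - Real.sqrt (b (n+1-j)))^2 := rfl
    rw [this, hsq, hsum]; ring
  rw [ge_iff_le, hgoal]
  have hdiv : (∑ i ∈ Finset.Icc 1 n, a i) / n = (1/(n:ℝ)) * ∑ i ∈ Finset.Icc 1 n, a i := by
    ring
  linarith [hamgm]
end

section
/- Let x_1, ..., x_s be nonnegative reals, let m ≥ s ≥ 2, and let k_1, ..., k_s be positive integers with k_1 + ... + k_s = m. Then (k_1 x_1^m + ... + k_s x_s^m)/m - x_1^{k_1} x_2^{k_2} ⋯ x_s^{k_s} ≥ (1/(m(m-1))) · Σ_{1 ≤ i < j ≤ s} (x_i^{m/2} - x_j^{m/2})². -/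
open Finset Real

-- Algebraic identity for the double sum of pairwise squares
lemma double_sum_sq (I : Finset ℕ) (M : ℝ) (K b y : ℕ → ℝ)
    (hb2 : ∀ i ∈ I, b i ^ 2 = y i) (hKsum : ∑ i ∈ I, K i = M) :
    ∑ i ∈ I, ∑ j ∈ I, (if i < j then (K i * K j) * (b i - b j) ^ 2 else 0)
      = M * (∑ i ∈ I, K i * y i) - (∑ i ∈ I, K i * b i) ^ 2 := by
  have key : ∑ i ∈ I, ∑ j ∈ I, (K i * K j) * (b i - b j) ^ 2
      = 2 * (M * (∑ i ∈ I, K i * y i) - (∑ i ∈ I, K i * b i) ^ 2) := by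
    calc ∑ i ∈ I, ∑ j ∈ I, (K i * K j) * (b i - b j) ^ 2
        = ∑ i ∈ I, ∑ j ∈ I,
            ((K i * y i) * K j + K i * (K j * y j) - (K i * b i) * (2 * (K j * b j))) := by
          refine Finset.sum_congr rfl fun i hi => Finset.sum_congr rfl fun j hj => ?_
          rw [← hb2 i hi, ← hb2 j hj]; ring
      _ = ∑ i ∈ I, ((K i * y i) * M + K i * (∑ j ∈ I, K j * y j)
            - (K i * b i) * (2 * (∑ j ∈ I, K j * b j))) := by
          refine Finset.sum_congr rfl fun i hi => ?_
          rw [Finset.sum_sub_distrib, Finset.sum_add_distrib]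
          have e1 : ∑ j ∈ I, (K i * y i) * K j = (K i * y i) * M := by
            rw [← Finset.mul_sum, hKsum]
          have e2 : ∑ j ∈ I, K i * (K j * y j) = K i * ∑ j ∈ I, K j * y j := by
            rw [Finset.mul_sum]
          have e3 : ∑ j ∈ I, (K i * b i) * (2 * (K j * b j))
              = (K i * b i) * (2 * (∑ j ∈ I, K j * b j)) := by
            rw [Finset.mul_sum, Finset.mul_sum]
          rw [e1, e2, e3]
      _ = 2 * (M * (∑ i ∈ I, K i * y i) - (∑ i ∈ I, K i * b i) ^ 2) := by
          rw [Finset.sum_sub_distrib, Finset.sum_add_distrib, ← Finset.sum_mul, ← Finset.sum_mul,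
            ← Finset.sum_mul, hKsum]
          ring
  have hsplit : ∑ i ∈ I, ∑ j ∈ I, (K i * K j) * (b i - b j) ^ 2
      = 2 * ∑ i ∈ I, ∑ j ∈ I, (if i < j then (K i * K j) * (b i - b j) ^ 2 else 0) := by
    have hswap : ∑ i ∈ I, ∑ j ∈ I, (if j < i then (K i * K j) * (b i - b j) ^ 2 else 0)
        = ∑ i ∈ I, ∑ j ∈ I, (if i < j then (K i * K j) * (b i - b j) ^ 2 else 0) := by
      rw [Finset.sum_comm]
      refine Finset.sum_congr rfl fun i _ => Finset.sum_congr rfl fun j _ => ?_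
      split_ifs <;> ring
    calc ∑ i ∈ I, ∑ j ∈ I, (K i * K j) * (b i - b j) ^ 2
        = ∑ i ∈ I, ∑ j ∈ I, ((if i < j then (K i * K j) * (b i - b j) ^ 2 else 0)
            + (if j < i then (K i * K j) * (b i - b j) ^ 2 else 0)) := by
          refine Finset.sum_congr rfl fun i _ => Finset.sum_congr rfl fun j _ => ?_
          rcases lt_trichotomy i j with h | h | h
          · rw [if_pos h, if_neg (lt_asymm h)]; ring
          · subst h; simp
          · rw [if_neg (lt_asymm h), if_pos h]; ring
      _ = ∑ i ∈ I, ∑ j ∈ I, (if i < j then (K i * K j) * (b i - b j) ^ 2 else 0)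
            + ∑ i ∈ I, ∑ j ∈ I, (if j < i then (K i * K j) * (b i - b j) ^ 2 else 0) := by
          simp only [Finset.sum_add_distrib]
      _ = 2 * ∑ i ∈ I, ∑ j ∈ I, (if i < j then (K i * K j) * (b i - b j) ^ 2 else 0) := by
          rw [hswap]; ring
  linarith

lemma core_amgm (m s : ℕ) (hm : 2 ≤ m)
    (x : ℕ → ℝ) (hx : ∀ i ∈ Finset.Icc 1 s, 0 ≤ x i)
    (k : ℕ → ℕ) (hk : ∀ i ∈ Finset.Icc 1 s, 1 ≤ k i)
    (hksum : ∑ i ∈ Finset.Icc 1 s, k i = m) :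
    ((m : ℝ) * ((m : ℝ) - 1)) * ∏ i ∈ Finset.Icc 1 s, x i ^ k i ≤
      (∑ i ∈ Finset.Icc 1 s, (k i : ℝ) * Real.sqrt (x i ^ m)) ^ 2
        - ∑ i ∈ Finset.Icc 1 s, (k i : ℝ) * x i ^ m := by
  set I := Finset.Icc 1 s with hI
  have hm' : (2 : ℝ) ≤ (m : ℝ) := by exact_mod_cast hm
  have hW : (0 : ℝ) < (m : ℝ) * ((m : ℝ) - 1) := by nlinarith
  have hm0 : (m : ℝ) ≠ 0 := by positivity
  have hm1 : (m : ℝ) - 1 ≠ 0 := by nlinarith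
  have hKsum : ∑ i ∈ I, (k i : ℝ) = (m : ℝ) := by exact_mod_cast hksum
  by_cases hzero : ∃ i ∈ I, x i = 0
  · obtain ⟨i0, hi0, hxi0⟩ := hzero
    have hP : ∏ i ∈ I, x i ^ k i = 0 := by
      refine Finset.prod_eq_zero hi0 ?_
      rw [hxi0]
      exact zero_pow (by have := hk i0 hi0; omega)
    rw [hP, mul_zero]
    have hbnn : ∀ i ∈ I, 0 ≤ Real.sqrt (x i ^ m) := fun i _ => Real.sqrt_nonneg _
    have hSbnn : 0 ≤ ∑ j ∈ I, (k j : ℝ) * Real.sqrt (x j ^ m) :=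
      Finset.sum_nonneg fun j hj => mul_nonneg (by positivity) (hbnn j hj)
    have hle : ∀ i ∈ I, (k i : ℝ) * x i ^ m
        ≤ ((k i : ℝ) * Real.sqrt (x i ^ m)) * ∑ j ∈ I, (k j : ℝ) * Real.sqrt (x j ^ m) := by
      intro i hi
      have hb2 : Real.sqrt (x i ^ m) * Real.sqrt (x i ^ m) = x i ^ m :=
        Real.mul_self_sqrt (pow_nonneg (hx i hi) m)
      have h1 : Real.sqrt (x i ^ m) ≤ ∑ j ∈ I, (k j : ℝ) * Real.sqrt (x j ^ m) := by
        refine le_trans (le_mul_of_one_le_left (hbnn i hi) (show (1:ℝ) ≤ (k i : ℝ) by exact_mod_cast hk i hi)) ?_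
        exact Finset.single_le_sum (f := fun j => (k j : ℝ) * Real.sqrt (x j ^ m)) (fun j hj => mul_nonneg (Nat.cast_nonneg _) (hbnn j hj)) hi
      calc (k i : ℝ) * x i ^ m = ((k i : ℝ) * Real.sqrt (x i ^ m)) * Real.sqrt (x i ^ m) := by
            linear_combination (-(k i : ℝ)) * hb2
        _ ≤ _ := mul_le_mul_of_nonneg_left h1 (mul_nonneg (by positivity) (hbnn i hi))
    have h2 := Finset.sum_le_sum hle
    rw [← Finset.sum_mul] at h2
    nlinarith [h2]
  · push_neg at hzero
    have hpos : ∀ i ∈ I, 0 < x i := fun i hi => lt_of_le_of_ne (hx i hi) (Ne.symm (hzero i hi))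
    set b : ℕ → ℝ := fun i => Real.sqrt (x i ^ m) with hb
    have hbpos : ∀ i ∈ I, 0 < b i := fun i hi => Real.sqrt_pos.2 (pow_pos (hpos i hi) m)
    set w : ℕ × ℕ → ℝ :=
      fun p => ((k p.1 : ℝ) * (k p.2 : ℝ) - if p.1 = p.2 then (k p.1 : ℝ) else 0)
        / ((m : ℝ) * ((m : ℝ) - 1)) with hwdef
    set z : ℕ × ℕ → ℝ := fun p => b p.1 * b p.2 with hzdef
    have hw0 : ∀ p ∈ I ×ˢ I, 0 ≤ w p := by
      intro p hp
      simp only [hwdef]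
      apply div_nonneg _ hW.le
      rcases eq_or_ne p.1 p.2 with h | h
      · rw [if_pos h, h]
        have h1 : (1 : ℝ) ≤ (k p.2 : ℝ) := by
          exact_mod_cast hk p.2 (Finset.mem_product.1 hp).2
        nlinarith
      · rw [if_neg h, sub_zero]; positivity
    have hw1 : ∑ p ∈ I ×ˢ I, w p = 1 := by
      rw [Finset.sum_product]
      have hrow : ∀ i ∈ I, ∑ j ∈ I, w (i, j) = (k i : ℝ) / m := by
        intro i hi
        simp only [hwdef]
        rw [← Finset.sum_div, Finset.sum_sub_distrib, ← Finset.mul_sum, hKsum,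
          Finset.sum_ite_eq I i (fun _ => (k i : ℝ)), if_pos hi]
        rw [div_eq_div_iff hW.ne' hm0]; ring
      calc ∑ i ∈ I, ∑ j ∈ I, w (i, j) = ∑ i ∈ I, (k i : ℝ) / m :=
            Finset.sum_congr rfl hrow
        _ = 1 := by rw [← Finset.sum_div, hKsum, div_self hm0]
    have hz0 : ∀ p ∈ I ×ˢ I, 0 ≤ z p := by
      intro p hp
      exact mul_nonneg (hbpos _ (Finset.mem_product.1 hp).1).le
        (hbpos _ (Finset.mem_product.1 hp).2).le
    have key := Real.geom_mean_le_arith_mean_weighted (I ×ˢ I) w z hw0 hw1 hz0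
    -- arithmetic side
    have hb2 : ∀ i ∈ I, b i * b i = x i ^ m := by
      intro i hi
      simp only [hb]
      exact Real.mul_self_sqrt (pow_nonneg (hx i hi) m)
    have harith : ∑ p ∈ I ×ˢ I, w p * z p
        = ((∑ i ∈ I, (k i : ℝ) * b i) ^ 2 - ∑ i ∈ I, (k i : ℝ) * x i ^ m)
          / ((m : ℝ) * ((m : ℝ) - 1)) := by
      have h1 : ∑ i ∈ I, (k i : ℝ) * x i ^ m
          = ∑ i ∈ I, ∑ j ∈ I, (if i = j then (k i : ℝ) else 0) * (b i * b j) := by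
        refine Finset.sum_congr rfl fun i hi => ?_
        have e : ∑ j ∈ I, (if i = j then (k i : ℝ) else 0) * (b i * b j)
            = ∑ j ∈ I, (if i = j then (k i : ℝ) * (b i * b j) else 0) :=
          Finset.sum_congr rfl fun j _ => by split_ifs <;> ring
        rw [e, Finset.sum_ite_eq I i (fun j => (k i : ℝ) * (b i * b j)), if_pos hi,
          hb2 i hi]
      have h2 : (∑ i ∈ I, (k i : ℝ) * b i) ^ 2
          = ∑ i ∈ I, ∑ j ∈ I, ((k i : ℝ) * (k j : ℝ)) * (b i * b j) := by
        rw [sq, Finset.sum_mul_sum]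
        exact Finset.sum_congr rfl fun i _ => Finset.sum_congr rfl fun j _ => by ring
      rw [Finset.sum_product, h2, h1]
      rw [← Finset.sum_sub_distrib]
      simp only [← Finset.sum_sub_distrib]
      simp only [Finset.sum_div]
      refine Finset.sum_congr rfl fun i _ => Finset.sum_congr rfl fun j _ => ?_
      simp only [hwdef, hzdef]
      try ring
    -- geometric side
    have hgeom : ∏ p ∈ I ×ˢ I, z p ^ w p = ∏ i ∈ I, x i ^ k i := by
      have hzpos : ∀ p ∈ I ×ˢ I, 0 < z p := fun p hp =>
        mul_pos (hbpos _ (Finset.mem_product.1 hp).1) (hbpos _ (Finset.mem_product.1 hp).2)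
      have hlogb : ∀ i ∈ I, Real.log (b i) = ((m : ℝ) * Real.log (x i)) / 2 := by
        intro i hi
        simp only [hb]
        rw [Real.log_sqrt (pow_nonneg (hx i hi) m), Real.log_pow]
        try ring
      set D : ℝ := ∑ i ∈ I, (k i : ℝ) * Real.log (x i) with hD
      set C : ℝ := ∑ i ∈ I, (k i : ℝ) * Real.log (b i) with hC
      have hCD : C = ((m : ℝ) * D) / 2 := by
        rw [hC, hD, Finset.mul_sum, Finset.sum_div]
        refine Finset.sum_congr rfl fun i hi => ?_
        rw [hlogb i hi]; ring
      have hsum : ∑ p ∈ I ×ˢ I, w p * Real.log (z p) = D := by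
        rw [Finset.sum_product]
        have hinner : ∀ i ∈ I, ∑ j ∈ I, w (i, j) * Real.log (z (i, j))
            = ((k i : ℝ) * (m : ℝ) * Real.log (b i) + (k i : ℝ) * C
                - 2 * (k i : ℝ) * Real.log (b i)) / ((m : ℝ) * ((m : ℝ) - 1)) := by
          intro i hi
          have e1 : ∀ j ∈ I, w (i, j) * Real.log (z (i, j))
              = (((k i : ℝ) * Real.log (b i)) * (k j : ℝ)
                  + (k i : ℝ) * ((k j : ℝ) * Real.log (b j))
                  - (if i = j then (k i : ℝ) * (Real.log (b i) + Real.log (b j)) else 0))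
                / ((m : ℝ) * ((m : ℝ) - 1)) := by
            intro j hj
            simp only [hwdef, hzdef]
            rw [Real.log_mul (hbpos i hi).ne' (hbpos j hj).ne']
            split_ifs <;> ring
          calc ∑ j ∈ I, w (i, j) * Real.log (z (i, j))
              = ∑ j ∈ I, (((k i : ℝ) * Real.log (b i)) * (k j : ℝ)
                  + (k i : ℝ) * ((k j : ℝ) * Real.log (b j))
                  - (if i = j then (k i : ℝ) * (Real.log (b i) + Real.log (b j)) else 0))
                / ((m : ℝ) * ((m : ℝ) - 1)) := Finset.sum_congr rfl e1
            _ = _ := by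
                rw [← Finset.sum_div]
                congr 1
                rw [Finset.sum_sub_distrib, Finset.sum_add_distrib, ← Finset.mul_sum, hKsum,
                  ← Finset.mul_sum, ← hC,
                  Finset.sum_ite_eq I i (fun j => (k i : ℝ) * (Real.log (b i) + Real.log (b j))),
                  if_pos hi]
                ring
        calc ∑ i ∈ I, ∑ j ∈ I, w (i, j) * Real.log (z (i, j))
            = ∑ i ∈ I, ((k i : ℝ) * (m : ℝ) * Real.log (b i) + (k i : ℝ) * C
                - 2 * (k i : ℝ) * Real.log (b i)) / ((m : ℝ) * ((m : ℝ) - 1)) :=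
              Finset.sum_congr rfl hinner
          _ = (((m : ℝ) - 2) * C + (m : ℝ) * C) / ((m : ℝ) * ((m : ℝ) - 1)) := by
              rw [← Finset.sum_div]
              congr 1
              rw [Finset.sum_sub_distrib, Finset.sum_add_distrib, ← Finset.sum_mul, hKsum]
              have e2 : ∑ i ∈ I, (k i : ℝ) * (m : ℝ) * Real.log (b i)
                  = (m : ℝ) * C := by
                rw [hC, Finset.mul_sum]
                exact Finset.sum_congr rfl fun i _ => by ring
              have e3 : ∑ i ∈ I, 2 * (k i : ℝ) * Real.log (b i) = 2 * C := by
                rw [hC, Finset.mul_sum]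
                exact Finset.sum_congr rfl fun i _ => by ring
              rw [e2, e3]
              ring
          _ = D := by
              rw [hCD]
              field_simp
              ring
      calc ∏ p ∈ I ×ˢ I, z p ^ w p
          = ∏ p ∈ I ×ˢ I, Real.exp (w p * Real.log (z p)) :=
            Finset.prod_congr rfl fun p hp => by
              rw [Real.rpow_def_of_pos (hzpos p hp), mul_comm]
        _ = Real.exp (∑ p ∈ I ×ˢ I, w p * Real.log (z p)) := by rw [Real.exp_sum]
        _ = Real.exp D := by rw [hsum]
        _ = ∏ i ∈ I, x i ^ k i := by
            rw [hD, Real.exp_sum]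
            refine Finset.prod_congr rfl fun i hi => ?_
            rw [← Real.log_pow, Real.exp_log (pow_pos (hpos i hi) _)]
    rw [hgeom, harith] at key
    rw [le_div_iff₀ hW] at key
    linarith

theorem weighted_amgm_pairs (m s : ℕ) (hs : 2 ≤ s) (hsm : s ≤ m)
    (x : ℕ → ℝ) (hx : ∀ i ∈ Finset.Icc 1 s, 0 ≤ x i)
    (k : ℕ → ℕ) (hk : ∀ i ∈ Finset.Icc 1 s, 1 ≤ k i)
    (hksum : ∑ i ∈ Finset.Icc 1 s, k i = m) :
    (∑ i ∈ Finset.Icc 1 s, (k i : ℝ) * x i ^ m) / m - ∏ i ∈ Finset.Icc 1 s, x i ^ k i ≥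
      (1 / (m * (m - 1) : ℝ)) *
        ∑ i ∈ Finset.Icc 1 s, ∑ j ∈ Finset.Icc 1 s,
          if i < j then (Real.sqrt (x i ^ m) - Real.sqrt (x j ^ m)) ^ 2 else 0 := by
  have hm : 2 ≤ m := le_trans hs hsm
  have hm' : (2 : ℝ) ≤ (m : ℝ) := by exact_mod_cast hm
  have hW : (0 : ℝ) < (m : ℝ) * ((m : ℝ) - 1) := by nlinarith
  have hm0 : (m : ℝ) ≠ 0 := by positivity
  have hm1 : (m : ℝ) - 1 ≠ 0 := by nlinarith
  set I := Finset.Icc 1 s with hI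
  set A : ℝ := ∑ i ∈ I, (k i : ℝ) * x i ^ m with hA
  set P : ℝ := ∏ i ∈ I, x i ^ k i with hP
  set Sb : ℝ := ∑ i ∈ I, (k i : ℝ) * Real.sqrt (x i ^ m) with hSb
  have hcore : ((m : ℝ) * ((m : ℝ) - 1)) * P ≤ Sb ^ 2 - A :=
    core_amgm m s hm x hx k hk hksum
  -- step B : bound the sum by the weighted sum
  have hSS' : (∑ i ∈ I, ∑ j ∈ I,
        if i < j then (Real.sqrt (x i ^ m) - Real.sqrt (x j ^ m)) ^ 2 else 0)
      ≤ ∑ i ∈ I, ∑ j ∈ I,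
        (if i < j then ((k i : ℝ) * (k j : ℝ))
          * (Real.sqrt (x i ^ m) - Real.sqrt (x j ^ m)) ^ 2 else 0) := by
    refine Finset.sum_le_sum fun i hi => Finset.sum_le_sum fun j hj => ?_
    split_ifs with h
    · have h1 : (1 : ℝ) ≤ (k i : ℝ) := by exact_mod_cast hk i hi
      have h2 : (1 : ℝ) ≤ (k j : ℝ) := by exact_mod_cast hk j hj
      have h3 : (1 : ℝ) ≤ (k i : ℝ) * (k j : ℝ) := by nlinarith
      exact le_mul_of_one_le_left (sq_nonneg _) h3
    · exact le_refl _
  -- step C : identify the weighted sum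
  have hS' : ∑ i ∈ I, ∑ j ∈ I,
        (if i < j then ((k i : ℝ) * (k j : ℝ))
          * (Real.sqrt (x i ^ m) - Real.sqrt (x j ^ m)) ^ 2 else 0)
      = (m : ℝ) * A - Sb ^ 2 := by
    have := double_sum_sq I (m : ℝ) (fun i => (k i : ℝ)) (fun i => Real.sqrt (x i ^ m))
      (fun i => x i ^ m)
      (fun i hi => Real.sq_sqrt (pow_nonneg (hx i hi) m))
      (by exact_mod_cast hksum)
    exact this
  rw [ge_iff_le]
  have hstep : (∑ i ∈ I, ∑ j ∈ I,
        if i < j then (Real.sqrt (x i ^ m) - Real.sqrt (x j ^ m)) ^ 2 else 0)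
      ≤ ((m : ℝ) - 1) * A - ((m : ℝ) * ((m : ℝ) - 1)) * P := by
    calc (∑ i ∈ I, ∑ j ∈ I,
          if i < j then (Real.sqrt (x i ^ m) - Real.sqrt (x j ^ m)) ^ 2 else 0)
        ≤ (m : ℝ) * A - Sb ^ 2 := hSS'.trans (le_of_eq hS')
      _ ≤ ((m : ℝ) - 1) * A - ((m : ℝ) * ((m : ℝ) - 1)) * P := by linarith
  calc (1 / ((m : ℝ) * ((m : ℝ) - 1))) *
        ∑ i ∈ I, ∑ j ∈ I,
          (if i < j then (Real.sqrt (x i ^ m) - Real.sqrt (x j ^ m)) ^ 2 else 0)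
      ≤ (1 / ((m : ℝ) * ((m : ℝ) - 1))) *
          (((m : ℝ) - 1) * A - ((m : ℝ) * ((m : ℝ) - 1)) * P) := by
        apply mul_le_mul_of_nonneg_left hstep (by positivity)
    _ = A / m - P := by field_simp
end

section
/- Let x_1 ≤ x_2 ≤ ... ≤ x_s be nonnegative reals, let m ≥ s ≥ 2, and let k_1, ..., k_s be positive integers with k_1 + ... + k_s = m. Then (k_1 x_1^m + ... + k_s x_s^m)/m - x_1^{k_1} ⋯ x_s^{k_s} ≥ (1/m) · Σ_{j=1}^{⌊s/2⌋} (x_j^{m/2} - x_{s+1-j}^{m/2})². -/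
open Finset Real

theorem weighted_amgm_opposite (m s : ℕ) (hs : 2 ≤ s) (hsm : s ≤ m)
    (x : ℕ → ℝ) (hx : ∀ i ∈ Finset.Icc 1 s, 0 ≤ x i)
    (hmono : ∀ i ∈ Finset.Icc 1 s, ∀ j ∈ Finset.Icc 1 s, i ≤ j → x i ≤ x j)
    (k : ℕ → ℕ) (hk : ∀ i ∈ Finset.Icc 1 s, 1 ≤ k i)
    (hksum : ∑ i ∈ Finset.Icc 1 s, k i = m) :
    (∑ i ∈ Finset.Icc 1 s, (k i : ℝ) * x i ^ m) / m - ∏ i ∈ Finset.Icc 1 s, x i ^ k i ≥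
      (1 / (m : ℝ)) *
        ∑ j ∈ Finset.Icc 1 (s / 2),
          (Real.sqrt (x j ^ m) - Real.sqrt (x (s + 1 - j) ^ m)) ^ 2 := by
  classical
  have hm2 : 2 ≤ m := le_trans hs hsm
  have hmR : (0:ℝ) < m := by exact_mod_cast Nat.lt_of_lt_of_le Nat.zero_lt_two hm2
  have hmne : (m:ℝ) ≠ 0 := ne_of_gt hmR
  set h := s / 2 with hhdef
  have h1 : 1 ≤ h := by omega
  have h2h : 2 * h ≤ s := by omega
  set A : Finset ℕ := Finset.Icc 1 h ∪ Finset.Icc (s+1-h) s with hAdef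
  have hdisj : Disjoint (Finset.Icc 1 h) (Finset.Icc (s+1-h) s) := by
    rw [Finset.disjoint_left]
    intro i hi hi'
    simp only [Finset.mem_Icc] at hi hi'
    omega
  have hAsub : A ⊆ Finset.Icc 1 s := by
    intro i hi
    rw [hAdef, Finset.mem_union] at hi
    simp only [Finset.mem_Icc] at hi ⊢
    omega
  have hcardA : A.card = 2 * h := by
    rw [hAdef, Finset.card_union_of_disjoint hdisj, Nat.card_Icc, Nat.card_Icc]
    omega
  set p : ℕ → ℕ := fun i => if i ∈ A then 1 else 0 with hpdef
  have hple : ∀ i ∈ Finset.Icc 1 s, p i ≤ k i := by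
    intro i hi
    have := hk i hi
    by_cases hiA : i ∈ A <;> simp only [hpdef, hiA, if_true, if_false] <;> omega
  set w : ℕ → ℝ := fun i => if i ≤ s then ((k i : ℝ) - p i)/m else 2/m with hwdef
  set z : ℕ → ℝ := fun i => if i ≤ s then x i ^ m
    else Real.sqrt (x (i - s) ^ m) * Real.sqrt (x (s + 1 - (i - s)) ^ m) with hzdef
  have hIccIoc : ∀ n : ℕ, Finset.Icc 1 n = Finset.Ioc 0 n := fun n => Finset.Icc_add_one_left_eq_Ioc 0 n
  -- shift reindexing
  have hshift_sum : ∀ f : ℕ → ℝ, ∑ i ∈ Finset.Ioc s (s+h), f i = ∑ j ∈ Finset.Icc 1 h, f (s + j) := by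
    intro f
    refine Finset.sum_bij' (fun i _ => i - s) (fun j _ => s + j) ?_ ?_ ?_ ?_ ?_
    · intro a ha; simp only [Finset.mem_Ioc] at ha; simp only [Finset.mem_Icc]; omega
    · intro a ha; simp only [Finset.mem_Icc] at ha; simp only [Finset.mem_Ioc]; omega
    · intro a ha; simp only [Finset.mem_Ioc] at ha; omega
    · intro a ha; simp only [Finset.mem_Icc] at ha; omega
    · intro a ha; simp only [Finset.mem_Ioc] at ha; congr 1; omega
  have hshift_prod : ∀ f : ℕ → ℝ, ∏ i ∈ Finset.Ioc s (s+h), f i = ∏ j ∈ Finset.Icc 1 h, f (s + j) := by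
    intro f
    refine Finset.prod_bij' (fun i _ => i - s) (fun j _ => s + j) ?_ ?_ ?_ ?_ ?_
    · intro a ha; simp only [Finset.mem_Ioc] at ha; simp only [Finset.mem_Icc]; omega
    · intro a ha; simp only [Finset.mem_Icc] at ha; simp only [Finset.mem_Ioc]; omega
    · intro a ha; simp only [Finset.mem_Ioc] at ha; omega
    · intro a ha; simp only [Finset.mem_Icc] at ha; omega
    · intro a ha; simp only [Finset.mem_Ioc] at ha; congr 1; omega
  -- pair reindexing
  have hpair_sum : ∀ f : ℕ → ℝ, ∑ j ∈ Finset.Icc 1 h, f (s + 1 - j) = ∑ i ∈ Finset.Icc (s+1-h) s, f i := by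
    intro f
    refine Finset.sum_bij' (fun j _ => s + 1 - j) (fun i _ => s + 1 - i) ?_ ?_ ?_ ?_ ?_
    · intro a ha; simp only [Finset.mem_Icc] at ha ⊢; omega
    · intro a ha; simp only [Finset.mem_Icc] at ha ⊢; omega
    · intro a ha; simp only [Finset.mem_Icc] at ha; omega
    · intro a ha; simp only [Finset.mem_Icc] at ha; omega
    · intro a ha; rfl
  have hpair_prod : ∀ f : ℕ → ℝ, ∏ j ∈ Finset.Icc 1 h, f (s + 1 - j) = ∏ i ∈ Finset.Icc (s+1-h) s, f i := by
    intro f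
    refine Finset.prod_bij' (fun j _ => s + 1 - j) (fun i _ => s + 1 - i) ?_ ?_ ?_ ?_ ?_
    · intro a ha; simp only [Finset.mem_Icc] at ha ⊢; omega
    · intro a ha; simp only [Finset.mem_Icc] at ha ⊢; omega
    · intro a ha; simp only [Finset.mem_Icc] at ha; omega
    · intro a ha; simp only [Finset.mem_Icc] at ha; omega
    · intro a ha; rfl
  -- casted sum of k
  have hksumR : ∑ i ∈ Finset.Icc 1 s, (k i : ℝ) = m := by exact_mod_cast hksum
  -- sum of indicator
  have hsump : ∑ i ∈ Finset.Icc 1 s, (p i : ℝ) = 2 * h := by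
    have e : ∀ i ∈ Finset.Icc 1 s, (p i : ℝ) = if i ∈ A then (1:ℝ) else 0 := by
      intro i _; simp only [hpdef]; split <;> simp
    rw [Finset.sum_congr rfl e, Finset.sum_ite_mem, Finset.inter_eq_right.mpr hAsub,
      Finset.sum_const, hcardA]
    push_cast; ring
  -- weights nonneg
  have hwnn : ∀ i ∈ Finset.Icc 1 (s+h), 0 ≤ w i := by
    intro i hi
    simp only [hwdef]
    split
    · rename_i his
      have hik : i ∈ Finset.Icc 1 s := by
        simp only [Finset.mem_Icc] at hi ⊢; omega
      have h1' : (p i : ℝ) ≤ (k i : ℝ) := by exact_mod_cast hple i hik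
      apply div_nonneg _ (le_of_lt hmR)
      linarith
    · positivity
  -- weights sum to 1
  have hwsum : ∑ i ∈ Finset.Icc 1 (s+h), w i = 1 := by
    rw [hIccIoc, ← Finset.sum_Ioc_consecutive w (Nat.zero_le s) (Nat.le_add_right s h),
      hshift_sum, ← hIccIoc]
    have e1 : ∀ i ∈ Finset.Icc 1 s, w i = ((k i:ℝ) - p i)/m := by
      intro i hi
      simp only [Finset.mem_Icc] at hi
      simp only [hwdef, if_pos hi.2]
    have e2 : ∀ j ∈ Finset.Icc 1 h, w (s + j) = 2/m := by
      intro j hj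
      simp only [Finset.mem_Icc] at hj
      have : ¬ (s + j ≤ s) := by omega
      simp only [hwdef, if_neg this]
    rw [Finset.sum_congr rfl e1, Finset.sum_congr rfl e2]
    have e3 : ∑ i ∈ Finset.Icc 1 s, ((k i:ℝ) - p i)/m
        = (∑ i ∈ Finset.Icc 1 s, (k i:ℝ) - ∑ i ∈ Finset.Icc 1 s, (p i:ℝ))/m := by
      rw [← Finset.sum_sub_distrib, Finset.sum_div]
    rw [e3, hksumR, hsump, Finset.sum_const, Nat.card_Icc, nsmul_eq_mul]
    have hh : ((h + 1 - 1 : ℕ) : ℝ) = (h:ℝ) := by push_cast; ring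
    rw [hh]
    field_simp
    ring
  -- values nonneg
  have hznn : ∀ i ∈ Finset.Icc 1 (s+h), 0 ≤ z i := by
    intro i hi
    simp only [hzdef]
    split
    · rename_i his
      have : 0 ≤ x i := hx i (by simp only [Finset.mem_Icc] at hi ⊢; omega)
      positivity
    · positivity
  -- AM-GM
  have key := Real.geom_mean_le_arith_mean_weighted (Finset.Icc 1 (s+h)) w z hwnn hwsum hznn
  -- product side
  have hprod : ∏ i ∈ Finset.Icc 1 (s+h), z i ^ w i = ∏ i ∈ Finset.Icc 1 s, x i ^ k i := by
    rw [hIccIoc, ← Finset.prod_Ioc_consecutive _ (Nat.zero_le s) (Nat.le_add_right s h),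
      hshift_prod, ← hIccIoc]
    have e1 : ∀ i ∈ Finset.Icc 1 s, z i ^ w i = x i ^ (k i - p i) := by
      intro i hi
      have hi' := hi
      simp only [Finset.mem_Icc] at hi'
      have hxi : 0 ≤ x i := hx i hi
      have hpk : p i ≤ k i := hple i hi
      simp only [hzdef, hwdef, if_pos hi'.2]
      rw [← Real.rpow_natCast (x i) m, ← Real.rpow_mul hxi, ← Real.rpow_natCast (x i) (k i - p i)]
      congr 1
      rw [Nat.cast_sub hpk]
      field_simp
    have e2 : ∀ j ∈ Finset.Icc 1 h, z (s + j) ^ w (s + j) = x j * x (s + 1 - j) := by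
      intro j hj
      simp only [Finset.mem_Icc] at hj
      have hns : ¬ (s + j ≤ s) := by omega
      have hjs : s + j - s = j := by omega
      have hxj : 0 ≤ x j := hx j (by simp only [Finset.mem_Icc]; omega)
      have hxu : 0 ≤ x (s+1-j) := hx _ (by simp only [Finset.mem_Icc]; omega)
      simp only [hzdef, hwdef, if_neg hns, hjs]
      have s1 : Real.sqrt (x j ^ m) = x j ^ ((m:ℝ)/2) := by
        rw [← Real.rpow_natCast (x j) m, Real.sqrt_eq_rpow, ← Real.rpow_mul hxj]
        congr 1; ring
      have s2 : Real.sqrt (x (s+1-j) ^ m) = x (s+1-j) ^ ((m:ℝ)/2) := by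
        rw [← Real.rpow_natCast _ m, Real.sqrt_eq_rpow, ← Real.rpow_mul hxu]
        congr 1; ring
      rw [s1, s2, ← Real.mul_rpow hxj hxu, ← Real.rpow_mul (mul_nonneg hxj hxu)]
      rw [show ((m:ℝ)/2) * (2/m) = 1 by field_simp]
      exact Real.rpow_one _
    rw [Finset.prod_congr rfl e1, Finset.prod_congr rfl e2, Finset.prod_mul_distrib,
      hpair_prod, ← Finset.prod_union hdisj, ← hAdef]
    have eA : ∏ i ∈ A, x i = ∏ i ∈ Finset.Icc 1 s, x i ^ p i := by
      have e : ∀ i ∈ Finset.Icc 1 s, x i ^ p i = if i ∈ A then x i else 1 := by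
        intro i _; simp only [hpdef]; split <;> simp
      rw [Finset.prod_congr rfl e, Finset.prod_ite_mem, Finset.inter_eq_right.mpr hAsub]
    rw [eA, ← Finset.prod_mul_distrib]
    apply Finset.prod_congr rfl
    intro i hi
    rw [← pow_add, Nat.sub_add_cancel (hple i hi)]
  -- sum side
  have hApx : ∑ i ∈ Finset.Icc 1 s, (p i : ℝ) * x i ^ m = ∑ i ∈ A, x i ^ m := by
    have e : ∀ i ∈ Finset.Icc 1 s, (p i:ℝ) * x i ^ m = if i ∈ A then x i ^ m else 0 := by
      intro i _; simp only [hpdef]; split <;> simp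
    rw [Finset.sum_congr rfl e, Finset.sum_ite_mem, Finset.inter_eq_right.mpr hAsub]
  have hsumwz : ∑ i ∈ Finset.Icc 1 (s+h), w i * z i
      = (∑ i ∈ Finset.Icc 1 s, (k i : ℝ) * x i ^ m - ∑ i ∈ A, x i ^ m
          + 2 * ∑ j ∈ Finset.Icc 1 h, Real.sqrt (x j ^ m) * Real.sqrt (x (s+1-j) ^ m))/m := by
    rw [hIccIoc, ← Finset.sum_Ioc_consecutive _ (Nat.zero_le s) (Nat.le_add_right s h),
      hshift_sum, ← hIccIoc]
    have e1 : ∀ i ∈ Finset.Icc 1 s, w i * z i = ((k i:ℝ) - p i)/m * x i ^ m := by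
      intro i hi
      simp only [Finset.mem_Icc] at hi
      simp only [hwdef, hzdef, if_pos hi.2]
    have e2 : ∀ j ∈ Finset.Icc 1 h, w (s + j) * z (s + j)
        = 2/m * (Real.sqrt (x j ^ m) * Real.sqrt (x (s+1-j) ^ m)) := by
      intro j hj
      simp only [Finset.mem_Icc] at hj
      have hns : ¬ (s + j ≤ s) := by omega
      have hjs : s + j - s = j := by omega
      simp only [hwdef, hzdef, if_neg hns, hjs]
    rw [Finset.sum_congr rfl e1, Finset.sum_congr rfl e2]
    have e3 : ∑ i ∈ Finset.Icc 1 s, ((k i:ℝ) - p i)/m * x i ^ m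
        = (∑ i ∈ Finset.Icc 1 s, (k i:ℝ) * x i ^ m
            - ∑ i ∈ Finset.Icc 1 s, (p i:ℝ) * x i ^ m)/m := by
      rw [← Finset.sum_sub_distrib, Finset.sum_div]
      apply Finset.sum_congr rfl
      intro i _
      ring
    rw [e3, hApx, ← Finset.mul_sum]
    ring
  -- expand squares on the RHS
  have hsq : ∑ j ∈ Finset.Icc 1 h, (Real.sqrt (x j ^ m) - Real.sqrt (x (s + 1 - j) ^ m)) ^ 2
      = ∑ i ∈ A, x i ^ m
        - 2 * ∑ j ∈ Finset.Icc 1 h, Real.sqrt (x j ^ m) * Real.sqrt (x (s+1-j) ^ m) := by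
    have e : ∀ j ∈ Finset.Icc 1 h,
        (Real.sqrt (x j ^ m) - Real.sqrt (x (s + 1 - j) ^ m)) ^ 2
          = x j ^ m + x (s+1-j) ^ m
            - 2 * (Real.sqrt (x j ^ m) * Real.sqrt (x (s+1-j) ^ m)) := by
      intro j hj
      simp only [Finset.mem_Icc] at hj
      have hxj : 0 ≤ x j := hx j (by simp only [Finset.mem_Icc]; omega)
      have hxu : 0 ≤ x (s+1-j) := hx _ (by simp only [Finset.mem_Icc]; omega)
      have q1 : Real.sqrt (x j ^ m) ^ 2 = x j ^ m := Real.sq_sqrt (by positivity)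
      have q2 : Real.sqrt (x (s+1-j) ^ m) ^ 2 = x (s+1-j) ^ m := Real.sq_sqrt (by positivity)
      rw [sub_sq, q1, q2]
      ring
    rw [Finset.sum_congr rfl e]
    rw [show (fun j => x j ^ m + x (s+1-j) ^ m
        - 2 * (Real.sqrt (x j ^ m) * Real.sqrt (x (s+1-j) ^ m))) = fun j => x j ^ m + x (s+1-j) ^ m
        - 2 * (Real.sqrt (x j ^ m) * Real.sqrt (x (s+1-j) ^ m)) from rfl]
    rw [Finset.sum_sub_distrib, Finset.sum_add_distrib, hpair_sum (fun i => x i ^ m),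
      ← Finset.sum_union hdisj, ← hAdef, ← Finset.mul_sum]
  -- combine
  rw [hprod, hsumwz] at key
  rw [ge_iff_le, hsq]
  have hid : (∑ i ∈ Finset.Icc 1 s, (k i : ℝ) * x i ^ m) / m
      - (∑ i ∈ Finset.Icc 1 s, (k i : ℝ) * x i ^ m - ∑ i ∈ A, x i ^ m
          + 2 * ∑ j ∈ Finset.Icc 1 h, Real.sqrt (x j ^ m) * Real.sqrt (x (s+1-j) ^ m))/m
      = (1/(m:ℝ)) * (∑ i ∈ A, x i ^ m
          - 2 * ∑ j ∈ Finset.Icc 1 h, Real.sqrt (x j ^ m) * Real.sqrt (x (s+1-j) ^ m)) := by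
    ring
  linarith [key, hid]
end

section
/- Let s ≤ m be positive integers and Ω = Σ_{k_j ≥ 1, Σ k_j = m} m!/(k_1!⋯k_s!). For nonnegative reals x_1, ..., x_s, the 'edge Laplacian form' L(e)x^m := Σ_{j=1}^s x_j^m − (s/Ω)·Σ_{k_j ≥ 1, Σk_j = m} (m!/(k_1!⋯k_s!)) x_1^{k_1} ⋯ x_s^{k_s} is nonnegative. -/
open Finset

lemma multinomial_comp_perm {s : ℕ} (k : Fin s → ℕ) (e : Equiv.Perm (Fin s)) :
    Nat.multinomial Finset.univ (fun i => k (e i)) = Nat.multinomial Finset.univ k := by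
  unfold Nat.multinomial
  rw [Equiv.sum_comp e k, Equiv.prod_comp e (fun i => Nat.factorial (k i))]

lemma amgm_pow {s m : ℕ} (hm : 1 ≤ m) (x : Fin s → ℝ) (hx : ∀ j, 0 ≤ x j)
    (k : Fin s → ℕ) (hk : ∑ j, k j = m) :
    ∏ j, x j ^ k j ≤ ∑ j, ((k j : ℝ) / m) * x j ^ m := by
  have hm' : (m : ℝ) ≠ 0 := by
    exact_mod_cast Nat.one_le_iff_ne_zero.mp hm
  have h := Real.geom_mean_le_arith_mean_weighted Finset.univ
    (fun j => (k j : ℝ) / m) (fun j => x j ^ m)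
    (fun j _ => by positivity)
    (by rw [← Finset.sum_div]; field_simp; exact_mod_cast hk)
    (fun j _ => pow_nonneg (hx j) m)
  refine le_trans (le_of_eq ?_) h
  apply Finset.prod_congr rfl
  intro j _
  rw [← Real.rpow_natCast (x j) m, ← Real.rpow_mul (hx j), ← Real.rpow_natCast (x j) (k j)]
  congr 1
  field_simp

theorem edge_laplacian_form_nonneg (s m : ℕ) (hs : 1 ≤ s) (hsm : s ≤ m)
    (x : Fin s → ℝ) (hx : ∀ j, 0 ≤ x j) :
    0 ≤ ∑ j : Fin s, x j ^ m -
      ((s : ℝ) /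
          (∑ k ∈ (Finset.Nat.antidiagonalTuple s m).filter (fun k => ∀ j, 1 ≤ k j),
            (Nat.multinomial Finset.univ k : ℝ))) *
        ∑ k ∈ (Finset.Nat.antidiagonalTuple s m).filter (fun k => ∀ j, 1 ≤ k j),
          (Nat.multinomial Finset.univ k : ℝ) * ∏ j : Fin s, x j ^ k j := by
  have hm : 1 ≤ m := le_trans hs hsm
  set S := (Finset.Nat.antidiagonalTuple s m).filter (fun k => ∀ j, 1 ≤ k j) with hS
  have hmemS : ∀ k, k ∈ S ↔ (∑ j, k j = m ∧ ∀ j, 1 ≤ k j) := by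
    intro k
    simp [hS, Finset.Nat.mem_antidiagonalTuple]
  -- S is nonempty
  have j0 : Fin s := ⟨0, hs⟩
  have hne : S.Nonempty := by
    refine ⟨fun i => 1 + (if i = j0 then m - s else 0), ?_⟩
    rw [hmemS]
    refine ⟨?_, fun j => by simp⟩
    rw [Finset.sum_add_distrib, Finset.sum_ite_eq' Finset.univ j0 (fun _ => m - s)]
    simp
    omega
  set Ω : ℝ := ∑ k ∈ S, (Nat.multinomial Finset.univ k : ℝ) with hΩdef
  have hΩ : 0 < Ω := by
    apply Finset.sum_pos (fun k _ => by exact_mod_cast Nat.multinomial_pos _ _) hne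
  -- symmetry: T j constant
  set T : Fin s → ℝ := fun j => ∑ k ∈ S, (Nat.multinomial Finset.univ k : ℝ) * k j with hTdef
  have hTsym : ∀ j j' : Fin s, T j = T j' := by
    intro j j'
    refine Finset.sum_equiv
      ⟨fun k i => k (Equiv.swap j j' i), fun k i => k (Equiv.swap j j' i),
        fun k => by ext i; simp, fun k => by ext i; simp⟩ ?_ ?_
    · intro k
      simp only [hmemS, Equiv.coe_fn_mk]
      constructor
      · rintro ⟨h1, h2⟩
        exact ⟨by rw [Equiv.sum_comp (Equiv.swap j j') k]; exact h1, fun i => h2 _⟩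
      · rintro ⟨h1, h2⟩
        refine ⟨?_, fun i => ?_⟩
        · rw [← Equiv.sum_comp (Equiv.swap j j') k]; exact h1
        · have := h2 (Equiv.swap j j' i)
          simpa using this
    · intro k hk
      simp only [Equiv.coe_fn_mk]
      rw [multinomial_comp_perm k (Equiv.swap j j')]
      congr 2
      simp [Equiv.swap_apply_right]
  have hTsum : ∑ j, T j = m * Ω := by
    rw [hTdef]
    rw [Finset.sum_comm]
    rw [hΩdef, Finset.mul_sum]
    apply Finset.sum_congr rfl
    intro k hk
    rw [← Finset.mul_sum]
    have : ∑ j, (k j : ℝ) = m := by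
      have := (hmemS k).1 hk
      exact_mod_cast this.1
    rw [this]; ring
  have hTval : ∀ j, T j = m * Ω / s := by
    intro j
    have h1 : (s : ℝ) * T j = m * Ω := by
      rw [← hTsum]
      rw [Finset.sum_congr rfl (fun j' _ => hTsym j' j)]
      simp [Finset.card_univ, mul_comm]
    have hs' : (s : ℝ) ≠ 0 := by
      exact_mod_cast Nat.one_le_iff_ne_zero.mp hs
    field_simp
    linarith
  -- the key inequality
  have key : ∑ k ∈ S, (Nat.multinomial Finset.univ k : ℝ) * ∏ j, x j ^ k j
      ≤ (Ω / s) * ∑ j, x j ^ m := by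
    have hm' : (m : ℝ) ≠ 0 := by exact_mod_cast Nat.one_le_iff_ne_zero.mp hm
    have hs' : (s : ℝ) ≠ 0 := by exact_mod_cast Nat.one_le_iff_ne_zero.mp hs
    calc ∑ k ∈ S, (Nat.multinomial Finset.univ k : ℝ) * ∏ j, x j ^ k j
        ≤ ∑ k ∈ S, (Nat.multinomial Finset.univ k : ℝ)
            * ∑ j, ((k j : ℝ) / m) * x j ^ m := by
          apply Finset.sum_le_sum
          intro k hk
          have hpos : (0:ℝ) ≤ Nat.multinomial Finset.univ k := by positivity
          exact mul_le_mul_of_nonneg_left (amgm_pow hm x hx k ((hmemS k).1 hk).1) hpos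
      _ = ∑ k ∈ S, ∑ j, (Nat.multinomial Finset.univ k : ℝ) * (((k j : ℝ) / m) * x j ^ m) := by
          simp_rw [Finset.mul_sum]
      _ = ∑ j, ∑ k ∈ S, (Nat.multinomial Finset.univ k : ℝ) * (((k j : ℝ) / m) * x j ^ m) :=
          Finset.sum_comm
      _ = ∑ j, T j / m * x j ^ m := by
          apply Finset.sum_congr rfl
          intro j _
          rw [hTdef]
          rw [Finset.sum_div, Finset.sum_mul]
          apply Finset.sum_congr rfl
          intro k _
          ring
      _ = (Ω / s) * ∑ j, x j ^ m := by
          rw [Finset.mul_sum]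
          apply Finset.sum_congr rfl
          intro j _
          rw [hTval j]
          field_simp
  -- conclude
  have hs' : (0:ℝ) < s := by
    have : s ≠ 0 := Nat.one_le_iff_ne_zero.mp hs
    positivity
  have h2 : ((s : ℝ) / Ω) * ∑ k ∈ S, (Nat.multinomial Finset.univ k : ℝ) * ∏ j, x j ^ k j
      ≤ ∑ j, x j ^ m := by
    have h3 := mul_le_mul_of_nonneg_left key (le_of_lt (div_pos hs' hΩ))
    refine le_trans h3 (le_of_eq ?_)
    field_simp
  linarith
end

section
/- Let s ≤ m be positive integers, Ω as above, and x_1, ..., x_s nonnegative reals. Then Σ_{j=1}^s x_j^m − (s/Ω)·Σ_{k_j ≥ 1, Σk_j=m} (m!/(k_1!⋯k_s!)) x_1^{k_1}⋯x_s^{k_s} ≥ (s/(m(m-1))) · Σ_{1 ≤ i < j ≤ s} (√(x_i^m) − √(x_j^m))². -/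
open Finset Real

lemma rowsum_w {s n : ℕ} (k : Fin s → ℕ) (hk : ∑ i, k i = n) (i : Fin s) :
    ∑ j : Fin s, (if i = j then k i * (k i - 1) else k i * k j) = k i * (n - 1) := by
  have hle : k i ≤ n := hk ▸ Finset.single_le_sum (f := k) (fun j _ => Nat.zero_le _) (mem_univ i)
  have herase : ∑ j ∈ univ.erase i, k j = n - k i := by
    have := Finset.add_sum_erase univ k (mem_univ i)
    omega
  rw [← Finset.add_sum_erase _ _ (mem_univ i)]
  have h1 : ∑ j ∈ univ.erase i, (if i = j then k i * (k i - 1) else k i * k j)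
      = k i * (n - k i) := by
    rw [Finset.sum_congr rfl (fun j hj => if_neg (fun h => (Finset.mem_erase.mp hj).1 h.symm)),
      ← Finset.mul_sum, herase]
  rw [if_pos rfl, h1, ← Nat.mul_add]
  rcases Nat.eq_zero_or_pos (k i) with h | h
  · simp [h]
  · congr 1; omega

lemma amgm_pairs_s13 {s n : ℕ} (hn : 2 ≤ n) (k : Fin s → ℕ) (hk : ∑ i, k i = n)
    (t : Fin s → ℝ) (ht : ∀ i, 0 ≤ t i) (G : ℝ) (hG : 0 ≤ G)
    (hGn : G ^ n = ∏ i, t i ^ (2 * k i)) :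
    (n : ℝ) * ((n : ℝ) - 1) * G ≤ (∑ i, (k i : ℝ) * t i) ^ 2 - ∑ i, (k i : ℝ) * t i ^ 2 := by
  classical
  set wn : Fin s → Fin s → ℕ := fun i j => if i = j then k i * (k i - 1) else k i * k j with hwn
  have hsymm : ∀ i j, wn i j = wn j i := by
    intro i j
    by_cases h : i = j
    · subst h; rfl
    · simp [hwn, h, Ne.symm h, Nat.mul_comm]
  have hcol : ∀ j, ∑ i : Fin s, wn i j = k j * (n - 1) := by
    intro j
    rw [Finset.sum_congr rfl (fun i _ => hsymm i j)]
    exact rowsum_w k hk j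
  set M : ℝ := (n : ℝ) * ((n : ℝ) - 1) with hM
  have hMn : ((n * (n - 1) : ℕ) : ℝ) = M := by
    have : (1 : ℕ) ≤ n := by omega
    push_cast [Nat.cast_sub this]
    ring
  have hMpos : 0 < M := by
    have : (2 : ℝ) ≤ (n : ℝ) := by exact_mod_cast hn
    nlinarith
  have htotal : ∑ p : Fin s × Fin s, ((wn p.1 p.2 : ℕ) : ℝ) = M := by
    rw [Fintype.sum_prod_type]
    have h1 : ∀ i : Fin s, ∑ j : Fin s, ((wn i j : ℕ) : ℝ) = ((k i * (n - 1) : ℕ) : ℝ) := by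
      intro i; rw [← Nat.cast_sum, hwn]; exact_mod_cast rowsum_w k hk i
    rw [Finset.sum_congr rfl (fun i _ => h1 i), ← Nat.cast_sum, ← Finset.sum_mul, hk]
    exact hMn
  -- AM-GM
  have hamgm := Real.geom_mean_le_arith_mean_weighted (univ : Finset (Fin s × Fin s))
    (fun p => (wn p.1 p.2 : ℝ) / M) (fun p => t p.1 * t p.2)
    (fun p _ => div_nonneg (Nat.cast_nonneg _) hMpos.le)
    (by rw [← Finset.sum_div, htotal, div_self hMpos.ne'])
    (fun p _ => mul_nonneg (ht _) (ht _))
  set L : ℝ := ∏ p : Fin s × Fin s, (t p.1 * t p.2) ^ ((wn p.1 p.2 : ℝ) / M) with hL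
  have hLnn : 0 ≤ L :=
    Finset.prod_nonneg fun p _ => Real.rpow_nonneg (mul_nonneg (ht _) (ht _)) _
  -- L ^ (n*(n-1)) = ∏ t i ^ (2 * k i * (n-1))
  have hLpow : L ^ (n * (n - 1)) = ∏ i, t i ^ (2 * (k i * (n - 1))) := by
    rw [hL, ← Finset.prod_pow]
    have step : ∀ p : Fin s × Fin s,
        ((t p.1 * t p.2) ^ ((wn p.1 p.2 : ℝ) / M)) ^ (n * (n - 1)) =
          (t p.1 * t p.2) ^ (wn p.1 p.2) := by
      intro p
      have hz : (0 : ℝ) ≤ t p.1 * t p.2 := mul_nonneg (ht _) (ht _)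
      rw [← Real.rpow_natCast ((t p.1 * t p.2) ^ ((wn p.1 p.2 : ℝ) / M)) (n * (n - 1)),
        ← Real.rpow_mul hz, hMn, div_mul_cancel₀ _ hMpos.ne', Real.rpow_natCast]
    rw [Finset.prod_congr rfl (fun p _ => step p), Fintype.prod_prod_type]
    have expand : ∀ i j : Fin s, (t i * t j) ^ (wn i j) = t i ^ (wn i j) * t j ^ (wn i j) :=
      fun i j => mul_pow _ _ _
    simp_rw [expand, Finset.prod_mul_distrib]
    rw [Finset.prod_comm (f := fun i j => t j ^ wn i j)]
    simp_rw [Finset.prod_pow_eq_pow_sum]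
    rw [← Finset.prod_mul_distrib]
    refine Finset.prod_congr rfl fun i _ => ?_
    rw [rowsum_w k hk i, hcol i, ← pow_add]
    ring_nf
  have hGpow : G ^ (n * (n - 1)) = ∏ i, t i ^ (2 * (k i * (n - 1))) := by
    rw [pow_mul, hGn, ← Finset.prod_pow]
    refine Finset.prod_congr rfl fun i _ => ?_
    rw [← pow_mul]
    ring_nf
  have hLG : G = L := by
    have hMn0 : n * (n - 1) ≠ 0 := Nat.mul_ne_zero (by omega) (by omega)
    exact (pow_left_strictMonoOn₀ hMn0).injOn hG hLnn (hGpow.trans hLpow.symm)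
  -- the arithmetic side
  have harith : ∑ p : Fin s × Fin s, ((wn p.1 p.2 : ℝ) / M) * (t p.1 * t p.2) =
      ((∑ i, (k i : ℝ) * t i) ^ 2 - ∑ i, (k i : ℝ) * t i ^ 2) / M := by
    rw [eq_div_iff hMpos.ne', Finset.sum_mul]
    have step : ∀ p : Fin s × Fin s, ((wn p.1 p.2 : ℝ) / M) * (t p.1 * t p.2) * M
        = (wn p.1 p.2 : ℝ) * (t p.1 * t p.2) := by
      intro p; field_simp
    rw [Finset.sum_congr rfl (fun p _ => step p)]
    have hcast : ∀ i j : Fin s, ((wn i j : ℕ) : ℝ) =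
        (k i : ℝ) * (k j : ℝ) - (if i = j then (k i : ℝ) else 0) := by
      intro i j
      by_cases h : i = j
      · subst h
        simp only [hwn, if_pos rfl]
        rcases Nat.eq_zero_or_pos (k i) with h0 | h0
        · simp [h0]
        · push_cast [Nat.cast_sub h0]
          ring
      · simp [hwn, h]
    rw [Fintype.sum_prod_type]
    simp_rw [hcast, sub_mul, Finset.sum_sub_distrib, ite_mul, zero_mul]
    rw [sq, Finset.sum_mul_sum]
    congr 1
    · refine Finset.sum_congr rfl fun i _ => Finset.sum_congr rfl fun j _ => by ring
    · refine Finset.sum_congr rfl fun i _ => ?_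
      rw [Finset.sum_ite_eq univ i (fun j => (k i : ℝ) * (t i * t j))]
      simp only [mem_univ, if_pos]
      ring
  rw [hLG]
  calc M * L ≤ M * (((∑ i, (k i : ℝ) * t i) ^ 2 - ∑ i, (k i : ℝ) * t i ^ 2) / M) := by
        apply mul_le_mul_of_nonneg_left _ hMpos.le
        rw [← harith]; exact hamgm
    _ = _ := by field_simp

lemma triangle_double {s : ℕ} (f : Fin s → Fin s → ℝ) (hsymm : ∀ i j, f i j = f j i)
    (hdiag : ∀ i, f i i = 0) :
    ∑ i : Fin s, ∑ j : Fin s, f i j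
      = 2 * ∑ i : Fin s, ∑ j : Fin s, (if i < j then f i j else 0) := by
  have key : ∀ i j : Fin s,
      f i j = (if i < j then f i j else 0) + (if j < i then f i j else 0) := by
    intro i j
    rcases lt_trichotomy i j with h | h | h
    · simp [h, lt_asymm h]
    · subst h; simp [hdiag]
    · simp [h, lt_asymm h]
  calc ∑ i : Fin s, ∑ j : Fin s, f i j
      = ∑ i : Fin s, ∑ j : Fin s,
          ((if i < j then f i j else 0) + (if j < i then f i j else 0)) := by
        exact Finset.sum_congr rfl fun i _ => Finset.sum_congr rfl fun j _ => key i j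
    _ = (∑ i : Fin s, ∑ j : Fin s, (if i < j then f i j else 0))
        + ∑ i : Fin s, ∑ j : Fin s, (if j < i then f i j else 0) := by
        simp [Finset.sum_add_distrib]
    _ = 2 * ∑ i : Fin s, ∑ j : Fin s, (if i < j then f i j else 0) := by
        rw [Finset.sum_comm (f := fun i j => if j < i then f i j else 0)]
        have h2 : ∀ i j : Fin s, (if i < j then f j i else 0) = (if i < j then f i j else 0) :=
          fun i j => by rw [hsymm]
        rw [Finset.sum_congr rfl fun i (_ : i ∈ univ) => Finset.sum_congr rfl fun j _ => h2 i j]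
        ring

lemma gap_bound {s m : ℕ} (hm : 2 ≤ m) (x : Fin s → ℝ) (hx : ∀ j, 0 ≤ x j)
    (k : Fin s → ℕ) (hk : ∑ i, k i = m) (hk1 : ∀ j, 1 ≤ k j) :
    (∑ i : Fin s, ∑ j : Fin s,
        if i < j then (Real.sqrt (x i ^ m) - Real.sqrt (x j ^ m)) ^ 2 else 0)
      ≤ (m : ℝ) * ((m : ℝ) - 1) * ((∑ j, ((k j : ℝ) / m) * x j ^ m) - ∏ j, x j ^ k j) := by
  have hm0 : (m : ℝ) ≠ 0 := by positivity
  set t : Fin s → ℝ := fun j => Real.sqrt (x j ^ m) with htdef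
  have ht : ∀ j, 0 ≤ t j := fun j => Real.sqrt_nonneg _
  have ht2 : ∀ j, t j ^ 2 = x j ^ m := fun j => Real.sq_sqrt (pow_nonneg (hx j) m)
  have hG : 0 ≤ ∏ j, x j ^ k j := Finset.prod_nonneg fun j _ => pow_nonneg (hx j) _
  have hGn : (∏ j, x j ^ k j) ^ m = ∏ j, t j ^ (2 * k j) := by
    rw [← Finset.prod_pow]
    refine Finset.prod_congr rfl fun j _ => ?_
    calc (x j ^ k j) ^ m = (x j ^ m) ^ k j := by
          rw [← pow_mul, ← pow_mul, Nat.mul_comm]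
      _ = (t j ^ 2) ^ k j := by rw [ht2]
      _ = t j ^ (2 * k j) := by rw [← pow_mul]
  have amgm := amgm_pairs_s13 hm k hk t ht _ hG hGn
  set A := ∑ i, (k i : ℝ) * t i ^ 2 with hA
  set B := ∑ i, (k i : ℝ) * t i with hB
  have hsum_k : ∑ i, (k i : ℝ) = (m : ℝ) := by exact_mod_cast hk
  have hD : ∑ i : Fin s, ∑ j : Fin s, (k i : ℝ) * (k j : ℝ) * (t i - t j) ^ 2
      = 2 * ((m : ℝ) * A - B ^ 2) := by
    have h1 : B ^ 2 = ∑ i : Fin s, ∑ j : Fin s, ((k i : ℝ) * t i) * ((k j : ℝ) * t j) := by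
      rw [sq, hB, Finset.sum_mul_sum]
    have h2 : (m : ℝ) * A = ∑ i : Fin s, ∑ j : Fin s, (k i : ℝ) * ((k j : ℝ) * t j ^ 2) := by
      rw [← hsum_k, hA, Finset.sum_mul_sum]
    have h3 : A * (m : ℝ) = ∑ i : Fin s, ∑ j : Fin s, ((k i : ℝ) * t i ^ 2) * (k j : ℝ) := by
      rw [← hsum_k, hA, Finset.sum_mul_sum]
    have hterm : ∀ i j : Fin s, (k i : ℝ) * (k j : ℝ) * (t i - t j) ^ 2
        = (k i : ℝ) * ((k j : ℝ) * t j ^ 2) + ((k i : ℝ) * t i ^ 2) * (k j : ℝ)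
          - 2 * (((k i : ℝ) * t i) * ((k j : ℝ) * t j)) := fun i j => by ring
    calc ∑ i : Fin s, ∑ j : Fin s, (k i : ℝ) * (k j : ℝ) * (t i - t j) ^ 2
        = ∑ i : Fin s, ∑ j : Fin s,
            ((k i : ℝ) * ((k j : ℝ) * t j ^ 2) + ((k i : ℝ) * t i ^ 2) * (k j : ℝ)
              - 2 * (((k i : ℝ) * t i) * ((k j : ℝ) * t j))) :=
          Finset.sum_congr rfl fun i _ => Finset.sum_congr rfl fun j _ => hterm i j
      _ = (m : ℝ) * A + A * (m : ℝ) - 2 * B ^ 2 := by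
          rw [h1, h2, h3]
          simp only [Finset.sum_add_distrib, Finset.sum_sub_distrib, ← Finset.mul_sum]
      _ = 2 * ((m : ℝ) * A - B ^ 2) := by ring
  have htri := triangle_double (fun i j => (k i : ℝ) * (k j : ℝ) * (t i - t j) ^ 2)
    (fun i j => by ring) (fun i => by simp)
  have hPQ : (∑ i : Fin s, ∑ j : Fin s, if i < j then (t i - t j) ^ 2 else 0)
      ≤ ∑ i : Fin s, ∑ j : Fin s,
          (if i < j then (k i : ℝ) * (k j : ℝ) * (t i - t j) ^ 2 else 0) := by
    refine Finset.sum_le_sum fun i _ => Finset.sum_le_sum fun j _ => ?_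
    split
    · have h1 : (1 : ℝ) ≤ (k i : ℝ) * (k j : ℝ) := by
        have h2 : 1 * 1 ≤ k i * k j := Nat.mul_le_mul (hk1 i) (hk1 j)
        exact_mod_cast h2
      nlinarith [sq_nonneg (t i - t j)]
    · exact le_refl _
  have key2 : (∑ i : Fin s, ∑ j : Fin s, if i < j then (t i - t j) ^ 2 else 0)
      ≤ (m : ℝ) * A - B ^ 2 := by
    rw [htri] at hD
    linarith
  have hMA : (m : ℝ) * ((m : ℝ) - 1) * (∑ j, ((k j : ℝ) / m) * x j ^ m)
      = ((m : ℝ) - 1) * A := by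
    rw [hA, Finset.mul_sum, Finset.mul_sum]
    refine Finset.sum_congr rfl fun j _ => ?_
    rw [← ht2 j]
    field_simp
  rw [mul_sub, hMA]
  linarith

lemma swap_coord_sum {s m : ℕ} (j1 j2 : Fin s) :
    ∑ k ∈ (Finset.Nat.antidiagonalTuple s m).filter (fun k => ∀ j, 1 ≤ k j),
        (Nat.multinomial Finset.univ k : ℝ) * (k j1 : ℝ)
      = ∑ k ∈ (Finset.Nat.antidiagonalTuple s m).filter (fun k => ∀ j, 1 ≤ k j),
        (Nat.multinomial Finset.univ k : ℝ) * (k j2 : ℝ) := by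
  classical
  have hC : ∀ k : Fin s → ℕ,
      Nat.multinomial Finset.univ (k ∘ Equiv.swap j1 j2) = Nat.multinomial Finset.univ k := by
    intro k
    simp only [Nat.multinomial]
    rw [show ∑ i : Fin s, (k ∘ Equiv.swap j1 j2) i = ∑ i : Fin s, k i from
        Equiv.sum_comp (Equiv.swap j1 j2) k,
      show ∏ i : Fin s, Nat.factorial ((k ∘ Equiv.swap j1 j2) i) = ∏ i : Fin s, Nat.factorial (k i) from
        Equiv.prod_comp (Equiv.swap j1 j2) (fun i => Nat.factorial (k i))]
  have hmem : ∀ k : Fin s → ℕ,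
      k ∈ (Finset.Nat.antidiagonalTuple s m).filter (fun k => ∀ j, 1 ≤ k j) →
      (k ∘ Equiv.swap j1 j2) ∈ (Finset.Nat.antidiagonalTuple s m).filter (fun k => ∀ j, 1 ≤ k j) := by
    intro k hk
    obtain ⟨h1, h2⟩ := Finset.mem_filter.mp hk
    refine Finset.mem_filter.mpr ⟨?_, fun j => h2 _⟩
    rw [Finset.Nat.mem_antidiagonalTuple] at h1 ⊢
    rw [show (fun i => (k ∘ Equiv.swap j1 j2) i) = fun i => k (Equiv.swap j1 j2 i) from rfl,
      Equiv.sum_comp (Equiv.swap j1 j2) k]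
    exact h1
  refine Finset.sum_nbij' (fun k => k ∘ Equiv.swap j1 j2) (fun k => k ∘ Equiv.swap j1 j2)
    hmem hmem ?_ ?_ ?_
  · intro k _; funext i; simp [Function.comp, Equiv.swap_apply_self]
  · intro k _; funext i; simp [Function.comp, Equiv.swap_apply_self]
  · intro k _
    rw [hC k]
    congr 2
    simp [Function.comp, Equiv.swap_apply_right]

theorem edge_laplacian_form_pairs_bound (s m : ℕ) (hs : 2 ≤ s) (hsm : s ≤ m)
    (x : Fin s → ℝ) (hx : ∀ j, 0 ≤ x j) :
    ∑ j : Fin s, x j ^ m -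
      ((s : ℝ) /
          (∑ k ∈ (Finset.Nat.antidiagonalTuple s m).filter (fun k => ∀ j, 1 ≤ k j),
            (Nat.multinomial Finset.univ k : ℝ))) *
        ∑ k ∈ (Finset.Nat.antidiagonalTuple s m).filter (fun k => ∀ j, 1 ≤ k j),
          (Nat.multinomial Finset.univ k : ℝ) * ∏ j : Fin s, x j ^ k j ≥
      ((s : ℝ) / (m * (m - 1))) *
        ∑ i : Fin s, ∑ j : Fin s,
          if i < j then (Real.sqrt (x i ^ m) - Real.sqrt (x j ^ m)) ^ 2 else 0 := by
  classical
  have hm2 : 2 ≤ m := le_trans hs hsm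
  set K := (Finset.Nat.antidiagonalTuple s m).filter (fun k => ∀ j, 1 ≤ k j) with hK
  have hmem : ∀ k ∈ K, (∑ i, k i = m) ∧ ∀ j, 1 ≤ k j := by
    intro k hk
    obtain ⟨h1, h2⟩ := Finset.mem_filter.mp hk
    exact ⟨Finset.Nat.mem_antidiagonalTuple.mp h1, h2⟩
  -- nonemptiness
  have hKne : K.Nonempty := by
    refine ⟨fun j => if j = (⟨0, by omega⟩ : Fin s) then m - s + 1 else 1, ?_⟩
    rw [hK, Finset.mem_filter]
    constructor
    · rw [Finset.Nat.mem_antidiagonalTuple]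
      rw [show (fun j : Fin s => if j = (⟨0, by omega⟩ : Fin s) then m - s + 1 else 1)
          = fun j : Fin s => (if j = (⟨0, by omega⟩ : Fin s) then m - s else 0) + 1 from
          funext fun j => by split <;> omega]
      rw [Finset.sum_add_distrib, Finset.sum_ite_eq' Finset.univ _ (fun _ => m - s)]
      simp only [Finset.mem_univ, if_pos, Finset.sum_const, Finset.card_univ,
        Fintype.card_fin, smul_eq_mul, mul_one]
      omega
    · intro j; dsimp only; split <;> omega
  set Ω := ∑ k ∈ K, (Nat.multinomial Finset.univ k : ℝ) with hΩ
  have hΩpos : 0 < Ω :=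
    Finset.sum_pos (fun k _ => by exact_mod_cast Nat.multinomial_pos _ _) hKne
  have hspos : (0 : ℝ) < s := by positivity
  have hmpos : (0 : ℝ) < m := by positivity
  set M := (m : ℝ) * ((m : ℝ) - 1) with hM
  have hMpos : 0 < M := by
    have : (2 : ℝ) ≤ (m : ℝ) := by exact_mod_cast hm2
    nlinarith
  set P := ∑ i : Fin s, ∑ j : Fin s,
      (if i < j then (Real.sqrt (x i ^ m) - Real.sqrt (x j ^ m)) ^ 2 else 0) with hPdef
  set SA := ∑ j : Fin s, x j ^ m with hSA
  set T := ∑ k ∈ K, (Nat.multinomial Finset.univ k : ℝ) * ∏ j : Fin s, x j ^ k j with hT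
  -- coordinate sums
  have hS : ∀ j : Fin s, (s : ℝ) * ∑ k ∈ K, (Nat.multinomial Finset.univ k : ℝ) * (k j : ℝ)
      = (m : ℝ) * Ω := by
    intro j
    have hall : ∀ j' : Fin s,
        ∑ k ∈ K, (Nat.multinomial Finset.univ k : ℝ) * (k j' : ℝ)
          = ∑ k ∈ K, (Nat.multinomial Finset.univ k : ℝ) * (k j : ℝ) := fun j' => by
      rw [hK]; exact swap_coord_sum j' j
    have h1 : ∑ j' : Fin s, ∑ k ∈ K, (Nat.multinomial Finset.univ k : ℝ) * (k j' : ℝ)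
        = (s : ℝ) * ∑ k ∈ K, (Nat.multinomial Finset.univ k : ℝ) * (k j : ℝ) := by
      rw [Finset.sum_congr rfl fun j' _ => hall j', Finset.sum_const, Finset.card_univ,
        Fintype.card_fin, nsmul_eq_mul]
    rw [← h1, Finset.sum_comm]
    rw [hΩ, Finset.mul_sum]
    refine Finset.sum_congr rfl fun k hk => ?_
    rw [← Finset.mul_sum]
    have : ∑ j' : Fin s, (k j' : ℝ) = (m : ℝ) := by exact_mod_cast (hmem k hk).1
    rw [this]; ring
  -- weighted average of the linear parts
  have hCS : ∑ k ∈ K, (Nat.multinomial Finset.univ k : ℝ) * (∑ j, ((k j : ℝ) / m) * x j ^ m)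
      = (Ω / s) * SA := by
    simp_rw [Finset.mul_sum]
    rw [Finset.sum_comm]
    have step : ∀ j : Fin s,
        ∑ k ∈ K, (Nat.multinomial Finset.univ k : ℝ) * (((k j : ℝ) / m) * x j ^ m)
          = (x j ^ m / m) * ∑ k ∈ K, (Nat.multinomial Finset.univ k : ℝ) * (k j : ℝ) := by
      intro j
      rw [Finset.mul_sum]
      exact Finset.sum_congr rfl fun k _ => by ring
    rw [Finset.sum_congr rfl fun j _ => step j]
    have step2 : ∀ j : Fin s,
        (x j ^ m / m) * ∑ k ∈ K, (Nat.multinomial Finset.univ k : ℝ) * (k j : ℝ)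
          = (Ω / s) * x j ^ m := by
      intro j
      have h2 : ∑ k ∈ K, (Nat.multinomial Finset.univ k : ℝ) * (k j : ℝ) = (m : ℝ) * Ω / s := by
        rw [← hS j]; field_simp
      rw [h2]; field_simp
    rw [Finset.sum_congr rfl fun j _ => step2 j, hSA, Finset.mul_sum]
  -- main weighted inequality
  have hsum : Ω * P ≤ M * ((Ω / s) * SA - T) := by
    have hgap : ∀ k ∈ K, P ≤ M * ((∑ j, ((k j : ℝ) / m) * x j ^ m) - ∏ j, x j ^ k j) :=
      fun k hk => gap_bound hm2 x hx k (hmem k hk).1 (hmem k hk).2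
    calc Ω * P = ∑ k ∈ K, (Nat.multinomial Finset.univ k : ℝ) * P := by
          rw [hΩ, Finset.sum_mul]
      _ ≤ ∑ k ∈ K, (Nat.multinomial Finset.univ k : ℝ)
            * (M * ((∑ j, ((k j : ℝ) / m) * x j ^ m) - ∏ j, x j ^ k j)) :=
          Finset.sum_le_sum fun k hk =>
            mul_le_mul_of_nonneg_left (hgap k hk) (Nat.cast_nonneg _)
      _ = M * ((∑ k ∈ K, (Nat.multinomial Finset.univ k : ℝ) * (∑ j, ((k j : ℝ) / m) * x j ^ m))
            - T) := by
          rw [hT, mul_sub, Finset.mul_sum, Finset.mul_sum, ← Finset.sum_sub_distrib]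
          exact Finset.sum_congr rfl fun k _ => by ring
      _ = M * ((Ω / s) * SA - T) := by rw [hCS]
  -- conclude
  rw [ge_iff_le, ← sub_nonneg]
  have e : SA - (s : ℝ) / Ω * T - (s : ℝ) / M * P
      = ((s : ℝ) / (Ω * M)) * (M * ((Ω / s) * SA - T) - Ω * P) := by
    field_simp
  have : 0 ≤ SA - (s : ℝ) / Ω * T - (s : ℝ) / M * P := by
    rw [e]
    apply mul_nonneg (by positivity)
    linarith
  linarith
end
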